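/- arXiv:2203.02627 — 7 statements merged into one kernel-verified Lean document; each statement's English description precedes it below -/
import Mathlib

section
/- Let Φ, Ψ : M_n(ℂ) → M_n(ℂ) be linear maps and define ⟨Φ,Ψ⟩_K := Σ_{i,j} tr(Φ(E_{ii})Ψ(E_{jj})*) + Σ_{i≠j} tr(Φ(E_{ij})Ψ(E_{ij})*). If v is a random vector with i.i.d. entries uniform on the unit circle and x := v ⊗ conj(v) (the rank-one matrix with entries v_i conj(v_j)), then E_v[tr(Φ(x)Ψ(x)*)] = ⟨Φ,Ψ⟩_K. -/
open MeasureTheory Matrix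

/-- The K-inner product on maps of matrices:
`⟨Φ,Ψ⟩_K = Σ_{i,j} tr(Φ(E_ii)Ψ(E_jj)*) + Σ_{i≠j} tr(Φ(E_ij)Ψ(E_ij)*)`. -/
noncomputable def Kip {n : ℕ}
    (Φ Ψ : Matrix (Fin n) (Fin n) ℂ → Matrix (Fin n) (Fin n) ℂ) : ℂ :=
  (∑ i, ∑ j, (Φ (Matrix.single i i 1) * (Ψ (Matrix.single j j 1))ᴴ).trace) +
    ∑ i, ∑ j, if i ≠ j then (Φ (Matrix.single i j 1) * (Ψ (Matrix.single i j 1))ᴴ).trace else 0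

/-- The uniform probability measure on `[0, 2π)`, parametrizing the unit circle. -/
noncomputable def circleUnif : Measure ℝ :=
  (ENNReal.ofReal (2 * Real.pi))⁻¹ • (volume.restrict (Set.Ico 0 (2 * Real.pi)))

/-- The random rank-one matrix `x = v ⊗ conj(v)` where `v m = exp(i θ m)`. -/
noncomputable def randX {n : ℕ} (θ : Fin n → ℝ) : Matrix (Fin n) (Fin n) ℂ :=
  Matrix.of fun i j =>
    Complex.exp ((θ i : ℂ) * Complex.I) * (starRingEnd ℂ) (Complex.exp ((θ j : ℂ) * Complex.I))

instance : IsProbabilityMeasure circleUnif := by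
  constructor
  have h : (0:ℝ) < 2 * Real.pi := by positivity
  simp only [circleUnif, Measure.smul_apply, Measure.restrict_apply MeasurableSet.univ,
    Set.univ_inter, Real.volume_Ico, sub_zero, smul_eq_mul]
  rw [ENNReal.inv_mul_cancel (ENNReal.ofReal_pos.mpr h).ne' ENNReal.ofReal_ne_top]

theorem integral_pi_prod {n : ℕ} (μ : Measure ℝ) [SigmaFinite μ] (f : Fin n → ℝ → ℂ) :
    ∫ x : Fin n → ℝ, ∏ i, f i (x i) ∂(Measure.pi fun _ => μ) = ∏ i, ∫ x, f i x ∂μ := by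
  induction n with
  | zero => simp [Measure.pi_of_empty, measureReal_def]
  | succ n ih =>
      calc
        _ = ∫ x : ℝ × (Fin n → ℝ),
            f 0 x.1 * ∏ i : Fin n, f (Fin.succ i) (x.2 i) ∂(μ.prod (Measure.pi fun _ => μ)) := by
          rw [← ((measurePreserving_piFinSuccAbove
            (fun _ : Fin (n+1) => μ) 0).symm).integral_comp']
          refine integral_congr_ae (Filter.Eventually.of_forall fun x => ?_)
          simp only []
          rw [Fin.prod_univ_succ]
          simp [MeasurableEquiv.piFinSuccAbove_symm_apply, Fin.zero_succAbove]
        _ = (∫ x, f 0 x ∂μ) * ∏ i : Fin n, ∫ x, f (Fin.succ i) x ∂μ := by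
          rw [← ih, ← integral_prod_mul]
        _ = ∏ i, ∫ x, f i x ∂μ := by rw [Fin.prod_univ_succ]

theorem circleUnif_int_exp (c : ℤ) :
    ∫ x : ℝ, Complex.exp (c * x * Complex.I) ∂circleUnif = if c = 0 then 1 else 0 := by
  have h : (0:ℝ) < 2 * Real.pi := by positivity
  rw [circleUnif, integral_smul_measure]
  rcases eq_or_ne c 0 with rfl | hc
  · simp only [Int.cast_zero, zero_mul, Complex.exp_zero, if_pos rfl]
    rw [setIntegral_const]
    simp only [measureReal_def, Real.volume_Ico, sub_zero]
    rw [ENNReal.toReal_ofReal h.le]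
    simp only [ENNReal.toReal_inv, ENNReal.toReal_ofReal h.le, Complex.real_smul, smul_eq_mul,
      mul_one]
    norm_cast
    rw [inv_mul_cancel₀ h.ne']
    norm_num
  · rw [if_neg hc]
    have key : ∫ x in Set.Ico 0 (2 * Real.pi), Complex.exp (c * x * Complex.I) = 0 := by
      rw [MeasureTheory.restrict_Ico_eq_restrict_Ioc,
        ← intervalIntegral.integral_of_le h.le]
      have : ∀ x : ℝ, (c : ℂ) * x * Complex.I = ((c : ℂ) * Complex.I) * x := fun x => by ring
      simp_rw [this]
      rw [integral_exp_mul_complex (by simp [hc, Complex.I_ne_zero])]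
      have : (c : ℂ) * Complex.I * (2 * Real.pi : ℝ) = c * (2 * Real.pi * Complex.I) := by
        push_cast; ring
      rw [this, Complex.exp_int_mul_two_pi_mul_I]
      simp
    rw [key, smul_zero]

lemma boole_or_split {α : Type*} [DecidableEq α] (i j k l : α) (x : ℂ) :
    (if (i = j ∧ k = l) ∨ (i = k ∧ j = l) then (1:ℂ) else 0) * x
      = (if i = j ∧ k = l then (1:ℂ) else 0) * x
        + (if i = k ∧ j = l then (1:ℂ) else 0) * x
        - (if i = j ∧ j = k ∧ k = l then (1:ℂ) else 0) * x := by
  by_cases h1 : i = j <;> by_cases h2 : k = l <;> by_cases h3 : i = k <;>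
    by_cases h4 : j = l <;> simp_all

lemma trace_expand {n : ℕ} (a b : Fin n → Fin n → ℂ)
    (A B : Fin n → Fin n → Matrix (Fin n) (Fin n) ℂ) :
    ((∑ i, ∑ j, a i j • A i j) * (∑ k, ∑ l, b k l • B k l)ᴴ).trace
      = ∑ i, ∑ j, ∑ k, ∑ l, (a i j * (starRingEnd ℂ) (b k l)) * (A i j * (B k l)ᴴ).trace := by
  simp only [conjTranspose_sum, conjTranspose_smul, Finset.sum_mul, Finset.mul_sum,
    Matrix.smul_mul, Matrix.mul_smul, trace_sum, trace_smul, smul_smul, smul_eq_mul,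
    RCLike.star_def]
  have swap4 : ∀ f : Fin n → Fin n → Fin n → Fin n → ℂ,
      ∑ i, ∑ j, ∑ k, ∑ l, f i j k l = ∑ i, ∑ j, ∑ k, ∑ l, f k l i j := by
    intro f
    have h1 : ∑ i, ∑ j, ∑ k, ∑ l, f i j k l
        = ∑ p : Fin n × Fin n, ∑ q : Fin n × Fin n, f p.1 p.2 q.1 q.2 := by
      simp_rw [Fintype.sum_prod_type]
    have h2 : ∑ i, ∑ j, ∑ k, ∑ l, f k l i j
        = ∑ p : Fin n × Fin n, ∑ q : Fin n × Fin n, f q.1 q.2 p.1 p.2 := by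
      simp_rw [Fintype.sum_prod_type]
    rw [h1, h2, Finset.sum_comm]
  rw [swap4]
  refine Finset.sum_congr rfl fun i _ => Finset.sum_congr rfl fun j _ =>
    Finset.sum_congr rfl fun k _ => Finset.sum_congr rfl fun l _ => by ring

theorem expectation_trace_eq_Kip {n : ℕ}
    (Φ Ψ : Matrix (Fin n) (Fin n) ℂ →ₗ[ℂ] Matrix (Fin n) (Fin n) ℂ) :
    ∫ θ : Fin n → ℝ, (Φ (randX θ) * (Ψ (randX θ))ᴴ).trace ∂(Measure.pi fun _ => circleUnif)
      = Kip ⇑Φ ⇑Ψ := by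
  classical
  set t : Fin n → Fin n → Fin n → Fin n → ℂ :=
    fun i j k l => (Φ (Matrix.single i j 1) * (Ψ (Matrix.single k l 1))ᴴ).trace with ht
  set cz : Fin n → Fin n → Fin n → Fin n → Fin n → ℤ :=
    fun i j k l m => ((Pi.single i 1 + Pi.single l 1 : Fin n → ℤ) m)
      - ((Pi.single j 1 + Pi.single k 1 : Fin n → ℤ) m)
    with hcz
  set w : (Fin n → ℝ) → Fin n → Fin n → Fin n → Fin n → ℂ :=
    fun θ i j k l => ∏ m, Complex.exp ((cz i j k l m : ℂ) * (θ m) * Complex.I) with hw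
  -- Step 1: pointwise expansion
  have key : ∀ θ : Fin n → ℝ, (Φ (randX θ) * (Ψ (randX θ))ᴴ).trace
      = ∑ i, ∑ j, ∑ k, ∑ l, w θ i j k l * t i j k l := by
    intro θ
    have hX : randX θ = ∑ i, ∑ j,
        (Complex.exp ((θ i : ℂ) * Complex.I)
          * (starRingEnd ℂ) (Complex.exp ((θ j : ℂ) * Complex.I)))
          • Matrix.single i j (1:ℂ) := by
      ext p q
      simp [randX, Matrix.sum_apply, Matrix.single, ite_and, mul_ite, mul_one, mul_zero,
        Finset.sum_ite_eq, Finset.sum_ite_eq']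
    rw [hX]
    simp only [map_sum, LinearMap.map_smul]
    rw [trace_expand]
    refine Finset.sum_congr rfl fun i _ => Finset.sum_congr rfl fun j _ =>
      Finset.sum_congr rfl fun k _ => Finset.sum_congr rfl fun l _ => ?_
    congr 1
    rw [hw]
    simp only []
    rw [← Complex.exp_sum]
    have hsum : ∑ m, (cz i j k l m : ℂ) * (θ m) * Complex.I
        = (θ i : ℂ) * Complex.I - (θ j : ℂ) * Complex.I - (θ k : ℂ) * Complex.I
          + (θ l : ℂ) * Complex.I := by
      rw [hcz]
      simp only [Pi.add_apply, Pi.single_apply]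
      push_cast
      simp only [sub_mul, add_mul, ite_mul, one_mul, zero_mul, Finset.sum_sub_distrib,
        Finset.sum_add_distrib, Finset.sum_ite_eq', Finset.mem_univ, if_pos]
      ring
    rw [hsum]
    have hc : ∀ x : ℝ, (starRingEnd ℂ) (Complex.exp ((x:ℂ) * Complex.I))
        = Complex.exp (-((x:ℂ) * Complex.I)) := by
      intro x
      rw [← Complex.exp_conj]
      congr 1
      simp [Complex.conj_ofReal]
    rw [_root_.map_mul, Complex.conj_conj, hc, hc]
    simp only [← Complex.exp_add]
    congr 1
    ring
  -- Step 2: integrability of each term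
  have hInt : ∀ i j k l, Integrable (fun θ : Fin n → ℝ => w θ i j k l * t i j k l)
      (Measure.pi fun _ => circleUnif) := by
    intro i j k l
    have hb : ∀ θ : Fin n → ℝ, ‖w θ i j k l * t i j k l‖ ≤ ‖t i j k l‖ := by
      intro θ
      rw [norm_mul]
      have h1 : ‖w θ i j k l‖ = 1 := by
        rw [hw]
        simp only []
        rw [norm_prod]
        refine Finset.prod_eq_one fun m _ => ?_
        have : ((cz i j k l m : ℂ)) * (θ m) * Complex.I
            = (((cz i j k l m : ℝ) * θ m : ℝ) : ℂ) * Complex.I := by push_cast; ring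
        rw [this, Complex.norm_exp_ofReal_mul_I]
      rw [h1, one_mul]
    refine (integrable_const (‖t i j k l‖)).mono' ?_ (Filter.Eventually.of_forall hb)
    refine Continuous.aestronglyMeasurable ?_
    refine Continuous.mul ?_ continuous_const
    rw [hw]
    exact continuous_finset_prod _ fun m _ => Complex.continuous_exp.comp
      (((continuous_const.mul (Complex.continuous_ofReal.comp (continuous_apply m))).mul
        continuous_const))
  -- Step 3: integral of each coefficient
  have hIw : ∀ i j k l, ∫ θ : Fin n → ℝ, w θ i j k l ∂(Measure.pi fun _ => circleUnif)
      = if (i = j ∧ k = l) ∨ (i = k ∧ j = l) then 1 else 0 := by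
    intro i j k l
    rw [hw]
    simp only []
    rw [integral_pi_prod circleUnif (fun m x => Complex.exp ((cz i j k l m : ℂ) * x * Complex.I))]
    simp_rw [circleUnif_int_exp]
    rw [Finset.prod_boole]
    have hiff : (∀ m ∈ Finset.univ, cz i j k l m = 0) ↔ ((i = j ∧ k = l) ∨ (i = k ∧ j = l)) := by
      simp only [Finset.mem_univ, true_implies, hcz, sub_eq_zero]
      rw [← funext_iff]
      rw [Pi.single_add_single_eq_single_add_single one_ne_zero one_ne_zero]
      constructor
      · rintro (⟨h1, h2⟩ | ⟨-, h1, h2⟩ | ⟨h, -, -⟩)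
        · exact Or.inl ⟨h1, h2.symm⟩
        · exact Or.inr ⟨h1, h2.symm⟩
        · exact absurd h (by norm_num)
      · rintro (⟨h1, h2⟩ | ⟨h1, h2⟩)
        · exact Or.inl ⟨h1, h2.symm⟩
        · exact Or.inr (Or.inl ⟨rfl, h1, h2.symm⟩)
    simp only [Finset.mem_univ, true_implies] at hiff
    simp [hiff]
  -- put the pieces together
  calc ∫ θ : Fin n → ℝ, (Φ (randX θ) * (Ψ (randX θ))ᴴ).trace ∂(Measure.pi fun _ => circleUnif)
      = ∑ i, ∑ j, ∑ k, ∑ l, ∫ θ : Fin n → ℝ, w θ i j k l * t i j k l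
          ∂(Measure.pi fun _ => circleUnif) := by
        rw [integral_congr_ae (Filter.Eventually.of_forall key)]
        rw [integral_finset_sum _ fun i _ => integrable_finset_sum _ fun j _ =>
          integrable_finset_sum _ fun k _ => integrable_finset_sum _ fun l _ => hInt i j k l]
        refine Finset.sum_congr rfl fun i _ => ?_
        rw [integral_finset_sum _ fun j _ => integrable_finset_sum _ fun k _ =>
          integrable_finset_sum _ fun l _ => hInt i j k l]
        refine Finset.sum_congr rfl fun j _ => ?_
        rw [integral_finset_sum _ fun k _ => integrable_finset_sum _ fun l _ => hInt i j k l]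
        refine Finset.sum_congr rfl fun k _ => ?_
        rw [integral_finset_sum _ fun l _ => hInt i j k l]
    _ = ∑ i, ∑ j, ∑ k, ∑ l,
          (if (i = j ∧ k = l) ∨ (i = k ∧ j = l) then (1:ℂ) else 0) * t i j k l := by
        refine Finset.sum_congr rfl fun i _ => Finset.sum_congr rfl fun j _ =>
          Finset.sum_congr rfl fun k _ => Finset.sum_congr rfl fun l _ => ?_
        rw [integral_mul_const, hIw]
    _ = Kip ⇑Φ ⇑Ψ := by
        simp_rw [boole_or_split, Finset.sum_sub_distrib, Finset.sum_add_distrib, boole_mul, ite_and]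
        have S1 : ∑ i, ∑ j, ∑ k, ∑ l,
            (if i = j then if k = l then t i j k l else 0 else 0) = ∑ i, ∑ k, t i i k k := by
          refine Finset.sum_congr rfl fun i _ => ?_
          have h1 : ∀ j, ∑ k, ∑ l, (if i = j then if k = l then t i j k l else 0 else 0)
              = if i = j then ∑ k, t i j k k else 0 := by
            intro j; by_cases h : i = j <;> simp [h]
          simp_rw [h1]
          simp
        have S2 : ∑ i, ∑ j, ∑ k, ∑ l,
            (if i = k then if j = l then t i j k l else 0 else 0) = ∑ i, ∑ j, t i j i j := by
          refine Finset.sum_congr rfl fun i _ => Finset.sum_congr rfl fun j _ => ?_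
          have h1 : ∀ k, ∑ l, (if i = k then if j = l then t i j k l else 0 else 0)
              = if i = k then t i j k j else 0 := by
            intro k; by_cases h : i = k <;> simp [h]
          simp_rw [h1]
          simp
        have S3 : ∑ i, ∑ j, ∑ k, ∑ l,
            (if i = j then if j = k then if k = l then t i j k l else 0 else 0 else 0)
              = ∑ i, t i i i i := by
          refine Finset.sum_congr rfl fun i _ => ?_
          have h1 : ∀ j, ∑ k, ∑ l,
              (if i = j then if j = k then if k = l then t i j k l else 0 else 0 else 0)
                = if i = j then t i j j j else 0 := by
            intro j
            by_cases h : i = j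
            · have h2 : ∀ k, ∑ l,
                  (if i = j then if j = k then if k = l then t i j k l else 0 else 0 else 0)
                    = if j = k then t i j k k else 0 := by
                intro k; by_cases hk : j = k <;> simp [h, hk]
              simp_rw [h2]
              simp [h]
            · simp [h]
          simp_rw [h1]
          simp
        rw [S1, S2, S3]
        have hD : ∑ i, ∑ j, (if i ≠ j then t i j i j else 0)
            = (∑ i, ∑ j, t i j i j) - ∑ i, t i i i i := by
          rw [← Finset.sum_sub_distrib]
          refine Finset.sum_congr rfl fun i _ => ?_
          have h1 : ∀ j, (if i ≠ j then t i j i j else 0)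
              = t i j i j - (if i = j then t i j i j else 0) := by
            intro j; by_cases h : i = j <;> simp [h]
          simp_rw [h1, Finset.sum_sub_distrib]
          simp
        have hKip : Kip ⇑Φ ⇑Ψ
            = (∑ i, ∑ j, t i i j j) + ∑ i, ∑ j, (if i ≠ j then t i j i j else 0) := by
          unfold Kip
          simp only [ht]
        rw [hKip, hD]
        ring
end

section
/- Let Φ, Ψ : M_n(ℂ) → M_n(ℂ) be positive linear maps (mapping positive-semidefinite matrices to positive-semidefinite matrices). If Ψ - Φ is a positive map, then ‖Φ‖_K ≤ ‖Ψ‖_K, where ‖Φ‖_K² := ⟨Φ,Φ⟩_K = Σ_{i,j} tr(Φ(E_{ii})Φ(E_{jj})*) + Σ_{i≠j} tr(Φ(E_{ij})Φ(E_{ij})*). -/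
open Matrix
open scoped ComplexOrder

/-- The K-norm of a map of matrices. -/
noncomputable def Knorm {n : ℕ}
    (Φ : Matrix (Fin n) (Fin n) ℂ → Matrix (Fin n) (Fin n) ℂ) : ℝ :=
  Real.sqrt (Kip Φ Φ).re

/-- A map of matrices is positive if it preserves positive semidefiniteness. -/
def IsPosMap {n : ℕ} (Φ : Matrix (Fin n) (Fin n) ℂ → Matrix (Fin n) (Fin n) ℂ) : Prop :=
  ∀ A : Matrix (Fin n) (Fin n) ℂ, A.PosSemidef → (Φ A).PosSemidef

section KnormAux
open Complex

noncomputable def chi (t : ZMod 4) : ℂ := Complex.I ^ t.val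

lemma I_pow_mod4 (m : ℕ) : Complex.I ^ (m % 4) = Complex.I ^ m := by
  conv_rhs => rw [← Nat.div_add_mod m 4]
  rw [pow_add, pow_mul, Complex.I_pow_four, one_pow, one_mul]

lemma chi_zero : chi 0 = 1 := by simp [chi]

lemma chi_add (a b : ZMod 4) : chi (a + b) = chi a * chi b := by
  unfold chi
  rw [ZMod.val_add, I_pow_mod4, pow_add]

lemma chi_ne_zero (a : ZMod 4) : chi a ≠ 0 := pow_ne_zero _ Complex.I_ne_zero

lemma chi_conj (a : ZMod 4) : (starRingEnd ℂ) (chi a) = chi (-a) := by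
  have h1 : chi a * chi (-a) = 1 := by rw [← chi_add, add_neg_cancel, chi_zero]
  have h2 : chi a * (starRingEnd ℂ) (chi a) = 1 := by
    unfold chi
    rw [map_pow, Complex.conj_I, ← mul_pow]
    simp
  exact mul_left_cancel₀ (chi_ne_zero a) (h2.trans h1.symm)

lemma chi_one : chi 1 = Complex.I := by
  show Complex.I ^ (1 : ZMod 4).val = Complex.I
  norm_num [show (1 : ZMod 4).val = 1 from rfl]
lemma chi_two : chi 2 = -1 := by
  show Complex.I ^ (2 : ZMod 4).val = -1
  norm_num [show (2 : ZMod 4).val = 2 from rfl, Complex.I_sq]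
lemma chi_three : chi 3 = -Complex.I := by
  show Complex.I ^ (3 : ZMod 4).val = -Complex.I
  norm_num [show (3 : ZMod 4).val = 3 from rfl, pow_succ, Complex.I_sq]

lemma sum_chi (e : ZMod 4) : ∑ t : ZMod 4, chi (e * t) = if e = 0 then 4 else 0 := by
  have h4 : e = 0 ∨ e = 1 ∨ e = 2 ∨ e = 3 := (by decide : ∀ x : ZMod 4, x = 0 ∨ x = 1 ∨ x = 2 ∨ x = 3) e
  have huniv : (Finset.univ : Finset (ZMod 4)) = insert 0 (insert 1 (insert 2 {3})) := by decide
  have hsum : ∀ f : ZMod 4 → ℂ, ∑ t : ZMod 4, f t = f 0 + f 1 + f 2 + f 3 := by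
    intro f
    rw [huniv, Finset.sum_insert (by decide), Finset.sum_insert (by decide),
      Finset.sum_insert (by decide), Finset.sum_singleton]
    ring
  have prods := True
  rcases h4 with rfl | rfl | rfl | rfl
  · rw [hsum]
    simp only [show (0:ZMod 4)*0 = 0 from rfl, show (0:ZMod 4)*1 = 0 from rfl,
      show (0:ZMod 4)*2 = 0 from rfl, show (0:ZMod 4)*3 = 0 from rfl, chi_zero,
      if_pos rfl]
    norm_num
  · rw [hsum, if_neg (by decide)]
    simp only [show (1:ZMod 4)*0 = 0 from rfl, show (1:ZMod 4)*1 = 1 from rfl,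
      show (1:ZMod 4)*2 = 2 from rfl, show (1:ZMod 4)*3 = 3 from rfl,
      chi_zero, chi_one, chi_two, chi_three]
    ring
  · rw [hsum, if_neg (by decide)]
    simp only [show (2:ZMod 4)*0 = 0 from rfl, show (2:ZMod 4)*1 = 2 from rfl,
      show (2:ZMod 4)*2 = 0 from rfl, show (2:ZMod 4)*3 = 2 from rfl,
      chi_zero, chi_two]
    ring
  · rw [hsum, if_neg (by decide)]
    simp only [show (3:ZMod 4)*0 = 0 from rfl, show (3:ZMod 4)*1 = 3 from rfl,
      show (3:ZMod 4)*2 = 2 from rfl, show (3:ZMod 4)*3 = 1 from rfl,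
      chi_zero, chi_one, chi_two, chi_three]
    ring



def eps {n : ℕ} (i j k l m : Fin n) : ZMod 4 :=
  (if m = i then 1 else 0) - (if m = j then 1 else 0)
    - (if m = k then 1 else 0) + (if m = l then 1 else 0)

lemma eps_zero_iff {n : ℕ} (i j k l : Fin n) :
    (∀ m, eps i j k l m = 0) ↔ ((i = j ∧ k = l) ∨ (i = k ∧ j = l)) := by
  constructor
  · intro h
    by_cases hij : i = j
    · subst hij
      left
      refine ⟨rfl, ?_⟩
      have hk := h k
      by_cases hkl : k = l
      · exact hkl
      · exfalso
        unfold eps at hk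
        rw [if_pos rfl, if_neg (fun hh : k = l => hkl hh)] at hk
        by_cases hki : k = i <;> simp [hki] at hk <;> revert hk <;> decide
    · right
      have hi := h i
      unfold eps at hi
      rw [if_pos rfl, if_neg (fun hh : i = j => hij hh)] at hi
      by_cases hik : i = k
      · refine ⟨hik, ?_⟩
        have hj := h j
        unfold eps at hj
        rw [if_pos rfl, if_neg (fun hh : j = i => hij hh.symm), ← hik] at hj
        rw [if_neg (fun hh : j = i => hij hh.symm)] at hj
        by_cases hjl : j = l
        · exact hjl
        · exfalso
          rw [if_neg hjl] at hj
          revert hj; decide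
      · exfalso
        rw [if_neg hik] at hi
        by_cases hil : i = l <;> simp [hil] at hi <;> revert hi <;> decide
  · rintro (⟨rfl, rfl⟩ | ⟨rfl, rfl⟩) m <;> unfold eps <;> ring

lemma sum_eps {n : ℕ} (c : Fin n → ZMod 4) (i j k l : Fin n) :
    ∑ m, eps i j k l m * c m = c i - c j - c k + c l := by
  unfold eps
  simp only [sub_mul, add_mul, ite_mul, one_mul, zero_mul, Finset.sum_add_distrib,
    Finset.sum_sub_distrib, Finset.sum_ite_eq', Finset.mem_univ, if_pos]

lemma chi_sum {n : ℕ} (f : Fin n → ZMod 4) :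
    chi (∑ m, f m) = ∏ m, chi (f m) := by
  classical
  induction (Finset.univ : Finset (Fin n)) using Finset.cons_induction with
  | empty => simp [chi_zero]
  | cons a s ha ih => rw [Finset.sum_cons, Finset.prod_cons, chi_add, ih]

lemma sum_coeff {n : ℕ} (i j k l : Fin n) :
    ∑ c : Fin n → ZMod 4,
      chi (c i) * (starRingEnd ℂ) (chi (c j)) * (starRingEnd ℂ) (chi (c k)) * chi (c l)
      = if (i = j ∧ k = l) ∨ (i = k ∧ j = l) then (4:ℂ)^n else 0 := by
  have step1 : ∀ c : Fin n → ZMod 4,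
      chi (c i) * (starRingEnd ℂ) (chi (c j)) * (starRingEnd ℂ) (chi (c k)) * chi (c l)
        = ∏ m, chi (eps i j k l m * c m) := by
    intro c
    rw [chi_conj, chi_conj, ← chi_sum, sum_eps, ← chi_add, ← chi_add, ← chi_add]
    ring_nf
  simp only [step1]
  rw [← Fintype.prod_sum (fun m t => chi (eps i j k l m * t))]
  by_cases hall : ∀ m, eps i j k l m = 0
  · rw [if_pos ((eps_zero_iff i j k l).mp hall)]
    calc ∏ m, ∑ t : ZMod 4, chi (eps i j k l m * t)
        = ∏ m : Fin n, (4:ℂ) := by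
          apply Finset.prod_congr rfl
          intro m _
          rw [sum_chi, if_pos (hall m)]
      _ = (4:ℂ)^n := by simp
  · rw [if_neg (fun hc => hall ((eps_zero_iff i j k l).mpr hc))]
    obtain ⟨m, hm⟩ := not_forall.mp hall
    apply Finset.prod_eq_zero (Finset.mem_univ m)
    rw [sum_chi, if_neg hm]



noncomputable def W {n : ℕ} (c : Fin n → ZMod 4) : Matrix (Fin n) (Fin n) ℂ :=
  Matrix.of fun p q => chi (c p) * (starRingEnd ℂ) (chi (c q))

lemma W_posSemidef {n : ℕ} (c : Fin n → ZMod 4) : (W c).PosSemidef := by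
  have h : W c = (Matrix.replicateCol Unit (fun p => chi (c p)))
      * (Matrix.replicateCol Unit (fun p => chi (c p)))ᴴ := by
    ext p q
    simp [W, Matrix.mul_apply, Matrix.replicateCol_apply, Matrix.conjTranspose_apply]
  rw [h]
  exact posSemidef_self_mul_conjTranspose _

lemma W_eq_sum {n : ℕ} (c : Fin n → ZMod 4) :
    W c = ∑ i, ∑ j, (chi (c i) * (starRingEnd ℂ) (chi (c j))) • Matrix.single i j (1:ℂ) := by
  conv_lhs => rw [matrix_eq_sum_single (W c)]
  refine Finset.sum_congr rfl fun i _ => Finset.sum_congr rfl fun j _ => ?_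
  rw [smul_single, smul_eq_mul, mul_one]
  rfl

lemma trace_psd_nonneg {n : ℕ} {A : Matrix (Fin n) (Fin n) ℂ} (hA : A.PosSemidef) :
    0 ≤ A.trace := by
  rw [Matrix.trace]
  apply Finset.sum_nonneg
  intro i _
  have := hA.dotProduct_mulVec_nonneg (Pi.single i 1)
  simpa [dotProduct, Matrix.mulVec_single, Pi.single_apply, apply_ite,
    ite_mul, Finset.sum_ite_eq] using this

lemma trace_mul_psd_nonneg {n : ℕ} {A B : Matrix (Fin n) (Fin n) ℂ}
    (hA : A.PosSemidef) (hB : B.PosSemidef) : 0 ≤ (A * Bᴴ).trace := by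
  rw [hB.1.eq]
  obtain ⟨C, hC⟩ : ∃ C : Matrix (Fin n) (Fin n) ℂ, A = Cᴴ * C := by
    open scoped MatrixOrder in
    obtain ⟨C, hC⟩ := CStarAlgebra.nonneg_iff_eq_star_mul_self.mp hA.nonneg
    exact ⟨C, hC⟩
  rw [hC, ← Matrix.trace_mul_cycle]
  exact trace_psd_nonneg (hB.mul_mul_conjTranspose_same C)

lemma trace_W {n : ℕ} (Φ Ψ : Matrix (Fin n) (Fin n) ℂ →ₗ[ℂ] Matrix (Fin n) (Fin n) ℂ)
    (c : Fin n → ZMod 4) :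
    ((Φ (W c)) * (Ψ (W c))ᴴ).trace =
      ∑ i, ∑ j, ∑ k, ∑ l,
        (chi (c i) * (starRingEnd ℂ) (chi (c j)) * (starRingEnd ℂ) (chi (c k)) * chi (c l))
          * ((Φ (Matrix.single i j 1)) * (Ψ (Matrix.single k l 1))ᴴ).trace := by
  have hPhi : Φ (W c) = ∑ i, ∑ j,
      (chi (c i) * (starRingEnd ℂ) (chi (c j))) • Φ (Matrix.single i j 1) := by
    rw [W_eq_sum, map_sum]
    refine Finset.sum_congr rfl fun i _ => ?_
    rw [map_sum]
    refine Finset.sum_congr rfl fun j _ => ?_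
    rw [_root_.map_smul]
  have hPsi : (Ψ (W c))ᴴ = ∑ k, ∑ l,
      ((starRingEnd ℂ) (chi (c k)) * chi (c l)) • (Ψ (Matrix.single k l 1))ᴴ := by
    rw [W_eq_sum, map_sum, Matrix.conjTranspose_sum]
    refine Finset.sum_congr rfl fun k _ => ?_
    rw [map_sum, Matrix.conjTranspose_sum]
    refine Finset.sum_congr rfl fun l _ => ?_
    rw [_root_.map_smul, Matrix.conjTranspose_smul, RCLike.star_def, _root_.map_mul,
      Complex.conj_conj, mul_comm]
  rw [hPhi, hPsi, Finset.sum_mul, Matrix.trace_sum]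
  refine Finset.sum_congr rfl fun i _ => ?_
  rw [Finset.sum_mul, Matrix.trace_sum]
  refine Finset.sum_congr rfl fun j _ => ?_
  rw [smul_mul_assoc, Matrix.trace_smul, Matrix.mul_sum, Matrix.trace_sum, Finset.smul_sum]
  refine Finset.sum_congr rfl fun k _ => ?_
  rw [Matrix.mul_sum, Matrix.trace_sum, Finset.smul_sum]
  refine Finset.sum_congr rfl fun l _ => ?_
  rw [mul_smul_comm, Matrix.trace_smul]
  simp only [smul_eq_mul]
  ring

lemma sum_swap5 {n : ℕ} (F : (Fin n → ZMod 4) → Fin n → Fin n → Fin n → Fin n → ℂ) :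
    ∑ c : Fin n → ZMod 4, ∑ i, ∑ j, ∑ k, ∑ l, F c i j k l
      = ∑ i, ∑ j, ∑ k, ∑ l, ∑ c : Fin n → ZMod 4, F c i j k l := by
  rw [Finset.sum_comm]
  refine Finset.sum_congr rfl fun i _ => ?_
  rw [Finset.sum_comm]
  refine Finset.sum_congr rfl fun j _ => ?_
  rw [Finset.sum_comm]
  refine Finset.sum_congr rfl fun k _ => ?_
  rw [Finset.sum_comm]

lemma ite_or_decomp (P Q : Prop) [Decidable P] [Decidable Q] (x : ℂ) :
    (if P ∨ Q then x else 0)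
      = ((if P then x else 0) + (if Q then x else 0)) - (if P ∧ Q then x else 0) := by
  by_cases hP : P <;> by_cases hQ : Q <;> simp [hP, hQ]

lemma sum_indicator {n : ℕ} (f : Fin n → Fin n → Fin n → Fin n → ℂ) :
    ∑ i, ∑ j, ∑ k, ∑ l, (if (i = j ∧ k = l) ∨ (i = k ∧ j = l) then f i j k l else 0)
      = (∑ i, ∑ k, f i i k k) + ∑ i, ∑ j, (if i ≠ j then f i j i j else 0) := by
  have key : ∀ i j k l : Fin n, (((i = j ∧ k = l) ∧ (i = k ∧ j = l)) ↔ (j = i ∧ k = i ∧ l = i)) := by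
    intro i j k l
    constructor
    · rintro ⟨⟨rfl, rfl⟩, ⟨rfl, -⟩⟩; exact ⟨rfl, rfl, rfl⟩
    · rintro ⟨rfl, rfl, rfl⟩; exact ⟨⟨rfl, rfl⟩, ⟨rfl, rfl⟩⟩
  simp only [ite_or_decomp, key]
  have hne : ∀ (i j : Fin n) (x : ℂ), (if i ≠ j then x else 0) = x - (if i = j then x else 0) := by
    intro i j x; by_cases h : i = j <;> simp [h]
  simp only [hne, ite_and, Finset.sum_sub_distrib, Finset.sum_add_distrib,
    Finset.sum_ite_irrel, Finset.sum_ite_eq, Finset.sum_ite_eq', Finset.mem_univ, if_true,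
    Finset.sum_const_zero]
  ring

lemma sum_trace_W {n : ℕ} (Φ Ψ : Matrix (Fin n) (Fin n) ℂ →ₗ[ℂ] Matrix (Fin n) (Fin n) ℂ) :
    ∑ c : Fin n → ZMod 4, ((Φ (W c)) * (Ψ (W c))ᴴ).trace = (4:ℂ)^n * Kip ⇑Φ ⇑Ψ := by
  simp only [trace_W]
  rw [sum_swap5]
  have inner : ∀ i j k l : Fin n,
      ∑ c : Fin n → ZMod 4,
        (chi (c i) * (starRingEnd ℂ) (chi (c j)) * (starRingEnd ℂ) (chi (c k)) * chi (c l))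
          * ((Φ (Matrix.single i j 1)) * (Ψ (Matrix.single k l 1))ᴴ).trace
      = (4:ℂ)^n * (if (i = j ∧ k = l) ∨ (i = k ∧ j = l) then
          ((Φ (Matrix.single i j 1)) * (Ψ (Matrix.single k l 1))ᴴ).trace else 0) := by
    intro i j k l
    rw [← Finset.sum_mul, sum_coeff, ite_mul, zero_mul, mul_ite, mul_zero]
  simp only [inner, ← Finset.mul_sum]
  rw [sum_indicator]
  rfl

lemma Kip_nonneg {n : ℕ} (Φ Ψ : Matrix (Fin n) (Fin n) ℂ →ₗ[ℂ] Matrix (Fin n) (Fin n) ℂ)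
    (hΦ : IsPosMap ⇑Φ) (hΨ : IsPosMap ⇑Ψ) : 0 ≤ Kip ⇑Φ ⇑Ψ := by
  have hsum : 0 ≤ ∑ c : Fin n → ZMod 4, ((Φ (W c)) * (Ψ (W c))ᴴ).trace :=
    Finset.sum_nonneg fun c _ =>
      trace_mul_psd_nonneg (hΦ _ (W_posSemidef c)) (hΨ _ (W_posSemidef c))
  rw [sum_trace_W] at hsum
  have h4 : (4:ℂ)^n = ((4^n : ℝ) : ℂ) := by push_cast; ring
  rw [h4] at hsum
  rw [Complex.le_def] at hsum ⊢
  obtain ⟨hre, him⟩ := hsum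
  rw [Complex.zero_re, Complex.re_ofReal_mul] at hre
  rw [Complex.zero_im, Complex.im_ofReal_mul] at him
  have hpos : (0:ℝ) < 4^n := by positivity
  constructor
  · rw [Complex.zero_re]
    exact nonneg_of_mul_nonneg_right (by linarith) hpos
  · rw [Complex.zero_im]
    have := him.symm
    rcases mul_eq_zero.mp this with h | h
    · linarith
    · exact h.symm

lemma kip_ite_add {P : Prop} [Decidable P] (a b : ℂ) :
    (if P then a + b else 0) = (if P then a else 0) + (if P then b else 0) := by
  split <;> simp

lemma Kip_add_left {n : ℕ} (Φ₁ Φ₂ Ψ : Matrix (Fin n) (Fin n) ℂ →ₗ[ℂ] Matrix (Fin n) (Fin n) ℂ) :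
    Kip ⇑(Φ₁ + Φ₂) ⇑Ψ = Kip ⇑Φ₁ ⇑Ψ + Kip ⇑Φ₂ ⇑Ψ := by
  unfold Kip
  simp only [LinearMap.add_apply, Matrix.add_mul, Matrix.trace_add, kip_ite_add,
    Finset.sum_add_distrib]
  ring

lemma Kip_add_right {n : ℕ} (Φ Ψ₁ Ψ₂ : Matrix (Fin n) (Fin n) ℂ →ₗ[ℂ] Matrix (Fin n) (Fin n) ℂ) :
    Kip ⇑Φ ⇑(Ψ₁ + Ψ₂) = Kip ⇑Φ ⇑Ψ₁ + Kip ⇑Φ ⇑Ψ₂ := by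
  unfold Kip
  simp only [LinearMap.add_apply, Matrix.conjTranspose_add, Matrix.mul_add, Matrix.trace_add,
    kip_ite_add, Finset.sum_add_distrib]
  ring


end KnormAux

theorem Knorm_mono {n : ℕ}
    (Φ Ψ : Matrix (Fin n) (Fin n) ℂ →ₗ[ℂ] Matrix (Fin n) (Fin n) ℂ)
    (hΦ : IsPosMap ⇑Φ) (hΨ : IsPosMap ⇑Ψ) (hΦΨ : IsPosMap ⇑(Ψ - Φ)) :
    Knorm ⇑Φ ≤ Knorm ⇑Ψ := by
  have hΨeq : Ψ = Φ + (Ψ - Φ) := by abel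
  have key : Kip ⇑Ψ ⇑Ψ = Kip ⇑Φ ⇑Φ +
      (Kip ⇑Φ ⇑(Ψ - Φ) + (Kip ⇑(Ψ - Φ) ⇑Φ + Kip ⇑(Ψ - Φ) ⇑(Ψ - Φ))) := by
    conv_lhs => rw [hΨeq]
    rw [Kip_add_left, Kip_add_right, Kip_add_right]
    ring
  have h1 := Kip_nonneg Φ (Ψ - Φ) hΦ hΦΨ
  have h2 := Kip_nonneg (Ψ - Φ) Φ hΦΨ hΦ
  have h3 := Kip_nonneg (Ψ - Φ) (Ψ - Φ) hΦΨ hΦΨ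
  have hre : ∀ z : ℂ, 0 ≤ z → 0 ≤ z.re := fun z hz => by
    have := (Complex.le_def.mp hz).1
    simpa using this
  unfold Knorm
  apply Real.sqrt_le_sqrt
  rw [key]
  simp only [Complex.add_re]
  have := hre _ h1; have := hre _ h2; have := hre _ h3
  linarith
end

section
/- Let A, B ∈ M_n(ℂ) and let Φ(X) = A ∘ X and Ψ(X) = B ∘ X be the corresponding Schur (entrywise) multiplication maps. Then ⟨Φ,Ψ⟩_K = tr(B*A), i.e., the K-inner product of two Schur multipliers equals the Hilbert–Schmidt inner product of their symbol matrices. -/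
open Matrix

theorem Kip_schurMultipliers {n : ℕ} (A B : Matrix (Fin n) (Fin n) ℂ) :
    Kip (fun X => A.hadamard X) (fun X => B.hadamard X) = (Bᴴ * A).trace := by
  simp only [Kip, Matrix.trace, Matrix.diag, Matrix.mul_apply, Matrix.hadamard_apply,
    Matrix.conjTranspose_apply, Matrix.single, Matrix.of_apply]
  simp [Finset.sum_ite_eq, apply_ite, Finset.mul_sum, mul_comm]
  simp only [ite_and]
  simp only [Finset.sum_ite_eq, Finset.sum_ite_eq', Finset.mem_univ, if_true, ite_self,
    Finset.sum_ite_irrel, Finset.sum_const_zero]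
  rw [Finset.sum_comm, ← Finset.sum_add_distrib]
  refine Finset.sum_congr rfl fun x _ => ?_
  rw [show A x x * (starRingEnd ℂ) (B x x)
      = ∑ y, if x = y then A x y * (starRingEnd ℂ) (B x y) else 0 by
        simp [Finset.sum_ite_eq], ← Finset.sum_add_distrib]
  refine Finset.sum_congr rfl fun y _ => ?_
  by_cases h1 : x = y
  · subst h1
    simp
  · rw [if_neg h1, if_neg (fun h => h1 h.symm), zero_add]
end

section
/- Let Φ : M_n(ℂ) → M_n(ℂ) be completely positive, and define B_Φ ∈ M_n(ℂ) by (B_Φ)_{ii} = ‖Φ(I_n)‖ (operator norm) for all i, and (B_Φ)_{ij} = (Φ(E_{ij}))_{ij} for i ≠ j. Then B_Φ is positive semidefinite. -/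
open Matrix
open scoped ComplexOrder

/-- The Choi matrix of a map of matrices: `Ch(Φ) = Σ_{i,j} E_ij ⊗ Φ(E_ij)`. -/
def choiMatrix {n : ℕ} (Φ : Matrix (Fin n) (Fin n) ℂ → Matrix (Fin n) (Fin n) ℂ) :
    Matrix (Fin n × Fin n) (Fin n × Fin n) ℂ :=
  Matrix.of fun p q => (Φ (Matrix.single p.1 q.1 1)) p.2 q.2

/-- A map is completely positive iff (Choi's theorem) its Choi matrix is positive
semidefinite. -/
def IsCPMap {n : ℕ} (Φ : Matrix (Fin n) (Fin n) ℂ → Matrix (Fin n) (Fin n) ℂ) : Prop :=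
  (choiMatrix Φ).PosSemidef

/-- The operator (spectral) norm of a matrix, via its action on Euclidean space. -/
noncomputable def opNorm {n : ℕ} (A : Matrix (Fin n) (Fin n) ℂ) : ℝ :=
  ‖toEuclideanCLM (𝕜 := ℂ) A‖

lemma diag_nonneg_of_posSemidef {n : ℕ} {M : Matrix (Fin n) (Fin n) ℂ}
    (hM : M.PosSemidef) (i : Fin n) : 0 ≤ M i i := by
  have h := hM.dotProduct_mulVec_nonneg (Pi.single i 1)
  simpa [dotProduct, Pi.single_apply, apply_ite (starRingEnd ℂ)] using h

lemma one_eq_sum_stdBasis {n : ℕ} :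
    (1 : Matrix (Fin n) (Fin n) ℂ) = ∑ i, Matrix.single i i (1 : ℂ) := by
  ext a b
  simp only [Finset.sum_apply, one_apply, Matrix.single, Matrix.sum_apply, of_apply]
  by_cases h : a = b
  · subst h; simp
  · rw [if_neg h, Finset.sum_eq_zero]
    intro k _
    simp only [ite_eq_right_iff, and_imp]
    rintro rfl rfl
    exact absurd rfl h

lemma phi_std_posSemidef {n : ℕ}
    (Φ : Matrix (Fin n) (Fin n) ℂ →ₗ[ℂ] Matrix (Fin n) (Fin n) ℂ) (hΦ : IsCPMap ⇑Φ)
    (j : Fin n) : (Φ (Matrix.single j j 1)).PosSemidef := by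
  exact hΦ.submatrix (fun l : Fin n => ((j, l) : Fin n × Fin n))

lemma diag_entry_le_opNorm {n : ℕ} {M : Matrix (Fin n) (Fin n) ℂ}
    (hM : M.PosSemidef) (i : Fin n) : M i i ≤ (opNorm M : ℂ) := by
  have h0 : 0 ≤ M i i := diag_nonneg_of_posSemidef hM i
  obtain ⟨hre, him⟩ := Complex.nonneg_iff.mp h0
  set T := toEuclideanCLM (𝕜 := ℂ) M with hT
  set x : EuclideanSpace ℂ (Fin n) := EuclideanSpace.single i (1 : ℂ) with hx
  have hinner : inner (𝕜 := ℂ) x (T x) = M i i := by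
    rw [EuclideanSpace.inner_single_left]
    have hTx : T x i = M i i := by
      have heq : WithLp.equiv 2 _ (T x) = Matrix.toLin' M (WithLp.equiv 2 _ x) :=
        ofLp_toEuclideanCLM (𝕜 := ℂ) M x
      have hx' : (WithLp.equiv 2 _ x : Fin n → ℂ) = Pi.single i 1 := by
        ext k
        simp [hx, EuclideanSpace.single_apply, Pi.single_apply]
      have := congrFun heq i
      simpa [hx', Matrix.toLin'_apply, Matrix.mulVec_single] using this
    simp [hTx]
  have hbound : ‖inner (𝕜 := ℂ) x (T x)‖ ≤ ‖T‖ := by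
    have h1 : ‖inner (𝕜 := ℂ) x (T x)‖ ≤ ‖x‖ * ‖T x‖ := norm_inner_le_norm x (T x)
    have h2 : ‖T x‖ ≤ ‖T‖ * ‖x‖ := T.le_opNorm x
    have hnx : ‖x‖ = 1 := by
      rw [hx, EuclideanSpace.norm_single]; simp
    rw [hnx, one_mul] at h1
    rw [hnx, mul_one] at h2
    linarith
  have hz : M i i = ((M i i).re : ℂ) := by
    apply Complex.ext <;> simp [← him]
  have hn : ‖M i i‖ = (M i i).re := by
    rw [hz]
    simp [Real.norm_eq_abs, abs_of_nonneg hre]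
  rw [hz]
  have : (M i i).re ≤ opNorm M := by
    rw [← hn, ← hinner]
    exact hbound
  exact_mod_cast this

theorem BPhi_posSemidef {n : ℕ}
    (Φ : Matrix (Fin n) (Fin n) ℂ →ₗ[ℂ] Matrix (Fin n) (Fin n) ℂ) (hΦ : IsCPMap ⇑Φ) :
    (Matrix.of fun i j =>
        if i = j then (opNorm (Φ 1) : ℂ) else (Φ (Matrix.single i j 1)) i j :
      Matrix (Fin n) (Fin n) ℂ).PosSemidef := by
  -- Φ(1) as sum of Φ(E_jj)
  have hΦ1 : Φ 1 = ∑ j, Φ (Matrix.single j j 1) := by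
    rw [one_eq_sum_stdBasis, map_sum]
  -- Φ(1) is PSD
  have hΦ1psd : (Φ 1).PosSemidef := by
    rw [hΦ1]
    exact Finset.sum_induction _ _ (fun _ _ h1 h2 => h1.add h2) (PosSemidef.zero)
      (fun j _ => phi_std_posSemidef Φ hΦ j)
  -- key: Φ(E_ii) i i ≤ opNorm (Φ 1)
  have key : ∀ i : Fin n, (Φ (Matrix.single i i 1)) i i ≤ (opNorm (Φ 1) : ℂ) := by
    intro i
    have hdiff : (Φ 1 - Φ (Matrix.single i i 1)).PosSemidef := by
      have : Φ 1 - Φ (Matrix.single i i 1)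
          = ∑ j ∈ Finset.univ.erase i, Φ (Matrix.single j j 1) := by
        rw [hΦ1, ← Finset.add_sum_erase _ _ (Finset.mem_univ i)]
        abel
      rw [this]
      exact Finset.sum_induction _ _ (fun _ _ h1 h2 => h1.add h2) (PosSemidef.zero)
        (fun j _ => phi_std_posSemidef Φ hΦ j)
    have h1 : (Φ (Matrix.single i i 1)) i i ≤ (Φ 1) i i := by
      have h := diag_nonneg_of_posSemidef hdiff i
      simp only [Matrix.sub_apply] at h
      exact sub_nonneg.mp h
    exact h1.trans (diag_entry_le_opNorm hΦ1psd i)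
  -- decompose B = C + diagonal d
  set C : Matrix (Fin n) (Fin n) ℂ :=
    (choiMatrix ⇑Φ).submatrix (fun i => (i, i)) (fun i => (i, i)) with hC
  set d : Fin n → ℂ := fun i => (opNorm (Φ 1) : ℂ) - (Φ (Matrix.single i i 1)) i i with hd
  have hBd : (Matrix.of fun i j =>
        if i = j then (opNorm (Φ 1) : ℂ) else (Φ (Matrix.single i j 1)) i j :
      Matrix (Fin n) (Fin n) ℂ) = C + Matrix.diagonal d := by
    ext a b
    by_cases h : a = b
    · subst h
      simp [C, d, choiMatrix, Matrix.diagonal_apply_eq]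
    · simp [C, d, choiMatrix, h, Matrix.diagonal_apply_ne _ h]
  rw [hBd]
  exact (hΦ.submatrix _).add (PosSemidef.diagonal fun i => by
    simpa [d, sub_nonneg] using key i)
end

section
/- The linear map Φ : M_n(ℂ) → M_n(ℂ) given by Φ(A) = (tr(A)/n) I_n + Σ_{i≠j} (A_{ij}/n) E_{ij} is unital, trace-preserving, and completely positive, and its range is contained in the matricial system S_n = {X : X_{ii} = X_{jj} for all i,j}. -/
open Matrix
open scoped ComplexOrder

/-- `Φ(A) = (tr A / n) I + Σ_{i≠j} (A_ij / n) E_ij`. -/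
noncomputable def PhiStar (n : ℕ) (A : Matrix (Fin n) (Fin n) ℂ) : Matrix (Fin n) (Fin n) ℂ :=
  (A.trace / n) • (1 : Matrix (Fin n) (Fin n) ℂ) +
    ∑ i, ∑ j, if i ≠ j then (A i j / n) • Matrix.single i j (1 : ℂ) else 0

lemma phiStar_sum_apply {n : ℕ} (A : Matrix (Fin n) (Fin n) ℂ) (a b : Fin n) :
    (∑ i, ∑ j, if i ≠ j then (A i j / n) • Matrix.single i j (1 : ℂ) else 0) a b
      = if a ≠ b then A a b / n else 0 := by
  rw [Matrix.sum_apply]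
  simp only [Matrix.sum_apply]
  have key : ∀ i j : Fin n,
      ((if i ≠ j then (A i j / n) • Matrix.single i j (1 : ℂ) else 0) : Matrix (Fin n) (Fin n) ℂ) a b
        = if i = a ∧ j = b ∧ a ≠ b then A a b / n else 0 := by
    intro i j
    by_cases hij : i = j
    · subst hij
      by_cases h : i = a ∧ i = b ∧ a ≠ b
    
      · exact absurd rfl (h.1 ▸ h.2.1 ▸ h.2.2)
      · simp [h]
    · by_cases ha : i = a <;> by_cases hb : j = b
      · subst ha; subst hb
        simp [hij, Matrix.single, smul_eq_mul]
      all_goals split_ifs with h <;>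
        simp_all [Matrix.single, Matrix.of_apply, smul_eq_mul, Pi.smul_apply]
  simp only [key]
  rw [Finset.sum_eq_single a]
  · rw [Finset.sum_eq_single b]
    · simp
    · intro j _ hj; simp [hj]
    · simp
  · intro i _ hi
    apply Finset.sum_eq_zero; intro j _; simp [hi]
  · simp

lemma phiStar_apply {n : ℕ} (A : Matrix (Fin n) (Fin n) ℂ) (a b : Fin n) :
    PhiStar n A a b = (A.trace / n) * (if a = b then 1 else 0) +
      (if a ≠ b then A a b / n else 0) := by
  simp only [PhiStar, Matrix.add_apply, Matrix.smul_apply, Matrix.one_apply, smul_eq_mul,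
    phiStar_sum_apply]

lemma choi_apply {n : ℕ} (p q : Fin n × Fin n) :
    choiMatrix (PhiStar n) p q =
      ((n : ℂ))⁻¹ * ((if p = q ∧ p.2 ≠ p.1 then 1 else 0) +
        (if p.2 = p.1 ∧ q.2 = q.1 then 1 else 0)) := by
  rcases p with ⟨p1, p2⟩; rcases q with ⟨q1, q2⟩
  simp only [choiMatrix, Matrix.of_apply, phiStar_apply]
  by_cases h1 : p1 = q1
  · subst h1
    rw [Matrix.trace_single_eq_same]
    simp only [Matrix.single, Matrix.of_apply]
    by_cases h2 : p2 = q2 <;> by_cases h3 : p2 = p1 <;>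
      simp_all [Prod.ext_iff, div_eq_mul_inv, mul_comm, eq_comm]
  · rw [Matrix.trace_single_eq_of_ne _ _ _ h1]
    simp only [Matrix.single, Matrix.of_apply]
    by_cases h2 : p2 = q2 <;> by_cases h3 : p2 = p1 <;> by_cases h4 : q2 = q1 <;>
      simp_all [Prod.ext_iff, div_eq_mul_inv, mul_comm, eq_comm]

lemma psd_vecMulVec {ι : Type*} [Fintype ι] (v : ι → ℂ) :
    (vecMulVec v (star v)).PosSemidef := by
  refine Matrix.posSemidef_iff_dotProduct_mulVec.mpr ⟨?_, ?_⟩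
  · ext i j
    simp [vecMulVec, Matrix.conjTranspose_apply, mul_comm]
  · intro x
    have h : star x ⬝ᵥ (vecMulVec v (star v) *ᵥ x)
        = (∑ p, star (x p) * v p) * (∑ q, star (v q) * x q) := by
      rw [Finset.sum_mul_sum]
      simp only [dotProduct, mulVec, vecMulVec, Matrix.of_apply, Pi.star_apply,
        Finset.mul_sum]
      refine Finset.sum_congr rfl fun p _ => Finset.sum_congr rfl fun q _ => by ring
    rw [h]
    have h2 : (∑ p, star (x p) * v p) = star (∑ q, star (v q) * x q) := by
      rw [star_sum]
      refine Finset.sum_congr rfl fun p _ => by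
        simp [star_mul', mul_comm]
    rw [h2]
    exact star_mul_self_nonneg _

lemma choi_psd {n : ℕ} : (choiMatrix (PhiStar n)).PosSemidef := by
  classical
  set d : Fin n × Fin n → ℂ := fun p => if p.2 ≠ p.1 then 1 else 0 with hd
  set v : Fin n × Fin n → ℂ := fun p => if p.2 = p.1 then 1 else 0 with hv
  have hC : choiMatrix (PhiStar n)
      = ((n : ℂ))⁻¹ • (Matrix.diagonal d + vecMulVec v (star v)) := by
    ext p q
    rw [choi_apply]
    simp only [Matrix.smul_apply, Matrix.add_apply, Matrix.diagonal_apply, vecMulVec,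
      Matrix.of_apply, Pi.star_apply, smul_eq_mul, hd, hv]
    congr 1
    congr 1
    · by_cases h : p = q <;> simp [h, ite_not]
    · by_cases h1 : p.2 = p.1 <;> by_cases h2 : q.2 = q.1 <;> simp [h1, h2]
  rw [hC]
  have hnn : (0 : ℂ) ≤ ((n : ℂ))⁻¹ := by
    rw [show ((n : ℂ))⁻¹ = ((((n : ℝ))⁻¹ : ℝ) : ℂ) by
      rw [Complex.ofReal_inv, Complex.ofReal_natCast], Complex.zero_le_real]
    positivity
  have hD : (Matrix.diagonal d).PosSemidef := by
    refine Matrix.posSemidef_diagonal_iff.mpr fun p => ?_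
    by_cases h : p.2 = p.1 <;> simp [hd, h]
  have hsum := hD.add (psd_vecMulVec v)
  refine Matrix.posSemidef_iff_dotProduct_mulVec.mpr ⟨?_, ?_⟩
  · rw [Matrix.IsHermitian, Matrix.conjTranspose_smul, hsum.1]
    congr 1
    simp
  · intro x
    rw [Matrix.smul_mulVec, dotProduct_smul, smul_eq_mul]
    exact mul_nonneg hnn (hsum.dotProduct_mulVec_nonneg x)

theorem PhiStar_properties {n : ℕ} (hn : 0 < n) :
    PhiStar n 1 = 1 ∧
    (∀ A : Matrix (Fin n) (Fin n) ℂ, (PhiStar n A).trace = A.trace) ∧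
    (choiMatrix (PhiStar n)).PosSemidef ∧
    (∀ A : Matrix (Fin n) (Fin n) ℂ, ∀ i j, (PhiStar n A) i i = (PhiStar n A) j j) := by
  have hn' : ((n : ℂ)) ≠ 0 := by exact_mod_cast hn.ne'
  have hdiag : ∀ A : Matrix (Fin n) (Fin n) ℂ, ∀ i, PhiStar n A i i = A.trace / n := by
    intro A i
    rw [phiStar_apply]
    simp
  refine ⟨?_, ?_, choi_psd, fun A i j => by rw [hdiag A i, hdiag A j]⟩
  · ext a b
    rw [phiStar_apply]
    rw [Matrix.trace_one]
    by_cases h : a = b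
    · subst h
      simp [Fintype.card_fin, div_self hn', Matrix.one_apply]
    · simp [h, Matrix.one_apply, Matrix.one_apply_ne h]
  · intro A
    have : (PhiStar n A).trace = ∑ i : Fin n, A.trace / n := by
      rw [Matrix.trace]
      exact Finset.sum_congr rfl fun i _ => hdiag A i
    rw [this, Finset.sum_const, Finset.card_univ, Fintype.card_fin, nsmul_eq_mul]
    field_simp
end

section
/- Let Γ and Λ be graphs on n and k vertices respectively, and let φ_Lin be the SDP value: φ_Lin(G) = max{(1/|V(G)|)Σ_{ij}A_{ij} : A ⪰ 0, A_{ii}=1, A_{ij}=0 for non-edges i≠j}. Then φ_Lin(Γ ⊠ Λ) ≥ φ_Lin(Γ)·φ_Lin(Λ), where Γ ⊠ Λ is the strong graph product. (Supermultiplicativity direction via tensor product of feasible solutions.) -/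
open Matrix SimpleGraph Kronecker

/-- The SDP value `φ_Lin(G)`: maximize `(1/|V|) Σ_ij A_ij` over PSD matrices with unit
diagonal vanishing on non-edges. -/
noncomputable def phiLin {V : Type*} [Fintype V] (G : SimpleGraph V) : ℝ :=
  sSup {r : ℝ | ∃ A : Matrix V V ℝ,
    A.PosSemidef ∧ (∀ i, A i i = 1) ∧ (∀ i j, i ≠ j → ¬G.Adj i j → A i j = 0) ∧
    r = (Fintype.card V : ℝ)⁻¹ * ∑ i, ∑ j, A i j}

/-- The strong product of two simple graphs: distinct pairs `(u,v)`, `(u',v')` are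
adjacent iff (`u = u'` or `u ~ u'`) and (`v = v'` or `v ~ v'`). -/
def strongProd {V W : Type*} (G : SimpleGraph V) (H : SimpleGraph W) :
    SimpleGraph (V × W) where
  Adj p q := p ≠ q ∧ (p.1 = q.1 ∨ G.Adj p.1 q.1) ∧ (p.2 = q.2 ∨ H.Adj p.2 q.2)
  symm := by
    constructor
    rintro p q ⟨hne, h1, h2⟩
    exact ⟨hne.symm, by tauto, by tauto⟩
  loopless := by constructor; rintro p ⟨hne, -, -⟩; exact hne rfl

private lemma kron_posSemidef {V W : Type*} [Fintype V] [Fintype W] [DecidableEq V]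
    [DecidableEq W] {A : Matrix V V ℝ} {B : Matrix W W ℝ}
    (hA : A.PosSemidef) (hB : B.PosSemidef) : (A ⊗ₖ B).PosSemidef := by
  exact hA.kronecker hB

private lemma sum_nonneg_of_psd {V : Type*} [Fintype V] {A : Matrix V V ℝ}
    (hA : A.PosSemidef) : 0 ≤ ∑ i, ∑ j, A i j := by
  have h := hA.dotProduct_mulVec_nonneg (fun _ => (1:ℝ))
  simpa [dotProduct, mulVec] using h

private lemma entry_le_one_of_psd {V : Type*} [Fintype V] [DecidableEq V]
    {A : Matrix V V ℝ} (hA : A.PosSemidef) (hd : ∀ i, A i i = 1) (i j : V) :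
    A i j ≤ 1 := by
  have hsym : A j i = A i j := by
    have := congrFun (congrFun hA.1 i) j
    simpa [conjTranspose_apply] using this
  have h2 := hA.dotProduct_mulVec_nonneg (fun a => (if a = i then 1 else 0) - (if a = j then 1 else 0))
  simp only [dotProduct, mulVec, star_trivial, mul_sub, sub_mul, mul_ite, ite_mul, mul_one,
    mul_zero, one_mul, zero_mul, Finset.sum_sub_distrib, Finset.sum_ite_eq,
    Finset.sum_ite_eq', Finset.mem_univ, if_true] at h2
  have h3 := hd i
  have h4 := hd j
  linarith

/-- Elements of the feasibility set are nonnegative. -/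
private lemma phiLin_set_nonneg {V : Type*} [Fintype V] {G : SimpleGraph V} {r : ℝ}
    (hr : r ∈ {r : ℝ | ∃ A : Matrix V V ℝ,
      A.PosSemidef ∧ (∀ i, A i i = 1) ∧ (∀ i j, i ≠ j → ¬G.Adj i j → A i j = 0) ∧
      r = (Fintype.card V : ℝ)⁻¹ * ∑ i, ∑ j, A i j}) : 0 ≤ r := by
  obtain ⟨A, hpsd, -, -, rfl⟩ := hr
  exact mul_nonneg (by positivity) (sum_nonneg_of_psd hpsd)

private lemma phiLin_set_bddAbove {V : Type*} [Fintype V] {G : SimpleGraph V} :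
    BddAbove {r : ℝ | ∃ A : Matrix V V ℝ,
      A.PosSemidef ∧ (∀ i, A i i = 1) ∧ (∀ i j, i ≠ j → ¬G.Adj i j → A i j = 0) ∧
      r = (Fintype.card V : ℝ)⁻¹ * ∑ i, ∑ j, A i j} := by
  classical
  refine ⟨(Fintype.card V : ℝ), ?_⟩
  rintro r ⟨A, hpsd, hd, -, rfl⟩
  have hsum : ∑ i, ∑ j, A i j ≤ (Fintype.card V : ℝ) * (Fintype.card V : ℝ) := by
    calc ∑ i, ∑ j, A i j ≤ ∑ _i : V, ∑ _j : V, (1:ℝ) :=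
          Finset.sum_le_sum fun i _ => Finset.sum_le_sum fun j _ =>
            entry_le_one_of_psd hpsd hd i j
      _ = (Fintype.card V : ℝ) * (Fintype.card V : ℝ) := by
          simp [Finset.card_univ]
  calc (Fintype.card V : ℝ)⁻¹ * ∑ i, ∑ j, A i j
      ≤ (Fintype.card V : ℝ)⁻¹ * ((Fintype.card V : ℝ) * (Fintype.card V : ℝ)) := by
        apply mul_le_mul_of_nonneg_left hsum (by positivity)
    _ ≤ (Fintype.card V : ℝ) := by
        rcases Nat.eq_zero_or_pos (Fintype.card V) with h | h
        · simp [h]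
        · have : (0:ℝ) < (Fintype.card V : ℝ) := by exact_mod_cast h
          rw [inv_mul_cancel_left₀ (ne_of_gt this)]

/-- `1` belongs to the feasibility set (the identity matrix). -/
private lemma one_mem_phiLin_set {V : Type*} [Fintype V] [Nonempty V] {G : SimpleGraph V} :
    (1:ℝ) ∈ {r : ℝ | ∃ A : Matrix V V ℝ,
      A.PosSemidef ∧ (∀ i, A i i = 1) ∧ (∀ i j, i ≠ j → ¬G.Adj i j → A i j = 0) ∧
      r = (Fintype.card V : ℝ)⁻¹ * ∑ i, ∑ j, A i j} := by
  classical
  refine ⟨1, Matrix.PosSemidef.one, fun i => by simp, fun i j hij _ => by simp [one_apply, hij], ?_⟩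
  have hcard : (0:ℝ) < (Fintype.card V : ℝ) := by
    exact_mod_cast Fintype.card_pos
  have : ∑ i : V, ∑ j : V, (1 : Matrix V V ℝ) i j = (Fintype.card V : ℝ) := by
    simp [one_apply, Finset.card_univ]
  rw [this, inv_mul_cancel₀ (ne_of_gt hcard)]

theorem phiLin_strongProd_supermultiplicative {V W : Type*} [Fintype V] [Fintype W]
    [Nonempty V] [Nonempty W] (G : SimpleGraph V) (H : SimpleGraph W) :
    phiLin G * phiLin H ≤ phiLin (strongProd G H) := by
  classical
  set SG := {r : ℝ | ∃ A : Matrix V V ℝ,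
    A.PosSemidef ∧ (∀ i, A i i = 1) ∧ (∀ i j, i ≠ j → ¬G.Adj i j → A i j = 0) ∧
    r = (Fintype.card V : ℝ)⁻¹ * ∑ i, ∑ j, A i j} with hSG
  set SH := {r : ℝ | ∃ A : Matrix W W ℝ,
    A.PosSemidef ∧ (∀ i, A i i = 1) ∧ (∀ i j, i ≠ j → ¬H.Adj i j → A i j = 0) ∧
    r = (Fintype.card W : ℝ)⁻¹ * ∑ i, ∑ j, A i j} with hSH
  set SP := {r : ℝ | ∃ A : Matrix (V × W) (V × W) ℝ,
    A.PosSemidef ∧ (∀ i, A i i = 1) ∧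
    (∀ i j, i ≠ j → ¬(strongProd G H).Adj i j → A i j = 0) ∧
    r = (Fintype.card (V × W) : ℝ)⁻¹ * ∑ i, ∑ j, A i j} with hSP
  have hG1 : (1:ℝ) ∈ SG := one_mem_phiLin_set
  have hH1 : (1:ℝ) ∈ SH := one_mem_phiLin_set
  -- tensor product of feasible solutions is feasible
  have key : ∀ a ∈ SG, ∀ b ∈ SH, a * b ∈ SP := by
    rintro a ⟨A, hApsd, hAd, hAe, rfl⟩ b ⟨B, hBpsd, hBd, hBe, rfl⟩
    refine ⟨A ⊗ₖ B, kron_posSemidef hApsd hBpsd, ?_, ?_, ?_⟩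
    · rintro ⟨i, j⟩
      simp [kroneckerMap_apply, hAd i, hBd j]
    · rintro ⟨i, j⟩ ⟨i', j'⟩ hne hadj
      have hno : ¬((i = i' ∨ G.Adj i i') ∧ (j = j' ∨ H.Adj j j')) :=
        fun hc => hadj ⟨hne, hc.1, hc.2⟩
      rcases not_and_or.mp hno with h | h
      · push_neg at h
        obtain ⟨h1, h2⟩ := h
        simp [kroneckerMap_apply, hAe i i' h1 h2]
      · push_neg at h
        obtain ⟨h1, h2⟩ := h
        simp [kroneckerMap_apply, hBe j j' h1 h2]
    · have hsum : ∑ p : V × W, ∑ q : V × W, (A ⊗ₖ B) p q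
          = (∑ i, ∑ j, A i j) * (∑ i, ∑ j, B i j) := by
        simp only [Fintype.sum_prod_type, kroneckerMap_apply]
        rw [Finset.sum_mul_sum]
        refine Finset.sum_congr rfl fun i _ => Finset.sum_congr rfl fun j _ => ?_
        exact (Finset.sum_mul_sum _ _ _ _).symm
      rw [hsum, Fintype.card_prod]
      push_cast
      rw [mul_inv]
      ring
  have hbdd : BddAbove SP := phiLin_set_bddAbove
  have hub : ∀ a ∈ SG, ∀ b ∈ SH, a * b ≤ phiLin (strongProd G H) := by
    intro a ha b hb
    exact le_csSup hbdd (key a ha b hb)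
  have hM1 : (1:ℝ) ≤ phiLin (strongProd G H) := by
    simpa using hub 1 hG1 1 hH1
  have hM0 : (0:ℝ) < phiLin (strongProd G H) := lt_of_lt_of_le one_pos hM1
  set M := phiLin (strongProd G H)
  -- now conclude sSup SG * sSup SH ≤ M
  have hSGne : SG.Nonempty := ⟨1, hG1⟩
  have hSHne : SH.Nonempty := ⟨1, hH1⟩
  have hsH0 : (1:ℝ) ≤ sSup SH := le_csSup phiLin_set_bddAbove hH1
  have hsHpos : (0:ℝ) < sSup SH := lt_of_lt_of_le one_pos hsH0
  have step1 : ∀ a ∈ SG, a * sSup SH ≤ M := by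
    intro a ha
    rcases le_or_gt a 0 with h | h
    · exact le_trans (mul_nonpos_of_nonpos_of_nonneg h (le_of_lt hsHpos)) (le_of_lt hM0)
    · have : sSup SH ≤ M / a := by
        apply csSup_le hSHne
        intro b hb
        rw [le_div_iff₀ h]
        calc b * a = a * b := mul_comm _ _
          _ ≤ M := hub a ha b hb
      calc a * sSup SH ≤ a * (M / a) := mul_le_mul_of_nonneg_left this (le_of_lt h)
        _ = M := by field_simp
  have : sSup SG ≤ M / sSup SH := by
    apply csSup_le hSGne
    intro a ha
    rw [le_div_iff₀ hsHpos]
    exact step1 a ha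
  show sSup SG * sSup SH ≤ M
  calc sSup SG * sSup SH ≤ (M / sSup SH) * sSup SH :=
        mul_le_mul_of_nonneg_right this (le_of_lt hsHpos)
    _ = M := by field_simp
end

section
/- Let Φ, Ψ : M_n(ℂ) → M_n(ℂ) be completely positive unital maps, and define for a CP unital map Θ the matrix B_Θ by (B_Θ)_{ii} = 1 and (B_Θ)_{ij} = (Θ(E_{ij}))_{ij} for i ≠ j. Then ‖B_Φ - B_Ψ‖₂ ≤ ‖Φ - Ψ‖_K, where ‖·‖₂ is the Hilbert–Schmidt norm on M_n(ℂ) and ‖·‖_K is the norm induced by the K-inner product on linear maps. -/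
open Matrix
open scoped ComplexOrder

/-- The Hilbert–Schmidt norm of a matrix. -/
noncomputable def hsNorm {n : ℕ} (A : Matrix (Fin n) (Fin n) ℂ) : ℝ :=
  Real.sqrt ((Aᴴ * A).trace.re)

/-- The matrix `B_Θ` of a unital CP map: ones on the diagonal and the `(i,j)` entries of
`Θ(E_ij)` off the diagonal. -/
def Bmat {n : ℕ} (Θ : Matrix (Fin n) (Fin n) ℂ → Matrix (Fin n) (Fin n) ℂ) :
    Matrix (Fin n) (Fin n) ℂ :=
  Matrix.of fun i j => if i = j then 1 else (Θ (Matrix.single i j 1)) i j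


lemma trace_mul_conjTranspose_re {n : ℕ} (X : Matrix (Fin n) (Fin n) ℂ) :
    ((X * Xᴴ).trace).re = ∑ k, ∑ l, Complex.normSq (X k l) := by
  simp [Matrix.trace, Matrix.mul_apply, Matrix.conjTranspose_apply, Matrix.diag,
    Complex.mul_conj, Complex.re_sum]

lemma trace_conjTranspose_mul_re {n : ℕ} (X : Matrix (Fin n) (Fin n) ℂ) :
    ((Xᴴ * X).trace).re = ∑ k, ∑ l, Complex.normSq (X l k) := by
  simp [Matrix.trace, Matrix.mul_apply, Matrix.conjTranspose_apply, Matrix.diag,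
    Complex.re_sum, mul_comm, Complex.mul_conj]

lemma sum_stdBasis {n : ℕ} :
    ∑ i : Fin n, (Matrix.single i i (1:ℂ) : Matrix (Fin n) (Fin n) ℂ) = 1 := by
  ext a b
  rw [Matrix.sum_apply]
  by_cases h : a = b
  · subst h
    simp [Matrix.single, Matrix.one_apply]
  · simp [Matrix.single, Matrix.one_apply, h]

theorem hsNorm_B_le_Knorm' {n : ℕ}
    (Φ Ψ : Matrix (Fin n) (Fin n) ℂ →ₗ[ℂ] Matrix (Fin n) (Fin n) ℂ)
    (hΦ1 : Φ 1 = 1) (hΨ1 : Ψ 1 = 1)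
    (Bmat : (Matrix (Fin n) (Fin n) ℂ → Matrix (Fin n) (Fin n) ℂ) → Matrix (Fin n) (Fin n) ℂ)
    (hB : ∀ Θ, Bmat Θ = Matrix.of fun i j => if i = j then 1 else (Θ (Matrix.single i j 1)) i j)
    (hsNorm : Matrix (Fin n) (Fin n) ℂ → ℝ)
    (hhs : ∀ A, hsNorm A = Real.sqrt ((Aᴴ * A).trace.re)) :
    hsNorm (Bmat ⇑Φ - Bmat ⇑Ψ) ≤ Real.sqrt ((((∑ i, ∑ j, ((Φ - Ψ) (Matrix.single i i 1) * (((Φ - Ψ) (Matrix.single j j 1)))ᴴ).trace) +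
    ∑ i, ∑ j, if i ≠ j then ((Φ - Ψ) (Matrix.single i j 1) * (((Φ - Ψ) (Matrix.single i j 1)))ᴴ).trace else 0)).re) := by
  classical
  have hΔ1 : ∑ i, ((Φ - Ψ) (Matrix.single i i (1:ℂ))) = 0 := by
    rw [← map_sum, sum_stdBasis]
    simp [LinearMap.sub_apply, hΦ1, hΨ1]
  have hterm1 : (∑ i, ∑ j, (((Φ - Ψ) (Matrix.single i i (1:ℂ))) * (((Φ - Ψ) (Matrix.single j j 1)))ᴴ).trace) = 0 := by
    have h : ∀ i : Fin n, ∑ j, (((Φ - Ψ) (Matrix.single i i (1:ℂ))) * (((Φ - Ψ) (Matrix.single j j 1)))ᴴ).trace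
        = (((Φ - Ψ) (Matrix.single i i 1)) * (∑ j, (Φ - Ψ) (Matrix.single j j 1))ᴴ).trace := by
      intro i
      rw [conjTranspose_sum, Finset.mul_sum, trace_sum]
    simp only [h, hΔ1, conjTranspose_zero, Matrix.mul_zero, trace_zero, Finset.sum_const_zero]
  rw [hhs, hterm1]
  apply Real.sqrt_le_sqrt
  rw [trace_conjTranspose_mul_re]
  rw [Finset.sum_comm]
  simp only [zero_add, Complex.re_sum, apply_ite Complex.re, Complex.zero_re]
  apply Finset.sum_le_sum
  intro i _
  apply Finset.sum_le_sum
  intro j _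
  by_cases hij : i = j
  · subst hij
    simp [hB, Matrix.sub_apply]
  · rw [if_pos hij, trace_mul_conjTranspose_re]
    have hent : (Bmat ⇑Φ - Bmat ⇑Ψ) i j = ((Φ - Ψ) (Matrix.single i j 1)) i j := by
      simp [hB, Matrix.sub_apply, hij, LinearMap.sub_apply]
    rw [hent]
    calc Complex.normSq (((Φ - Ψ) (Matrix.single i j 1)) i j)
        ≤ ∑ l, Complex.normSq (((Φ - Ψ) (Matrix.single i j 1)) i l) :=
          Finset.single_le_sum (fun _ _ => Complex.normSq_nonneg _) (Finset.mem_univ j)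
      _ ≤ ∑ k, ∑ l, Complex.normSq (((Φ - Ψ) (Matrix.single i j 1)) k l) :=
          Finset.single_le_sum (fun _ _ => Finset.sum_nonneg fun _ _ => Complex.normSq_nonneg _) (Finset.mem_univ i)

theorem hsNorm_B_le_Knorm {n : ℕ}
    (Φ Ψ : Matrix (Fin n) (Fin n) ℂ →ₗ[ℂ] Matrix (Fin n) (Fin n) ℂ)
    (hΦcp : IsCPMap ⇑Φ) (hΨcp : IsCPMap ⇑Ψ)
    (hΦ1 : Φ 1 = 1) (hΨ1 : Ψ 1 = 1) :
    hsNorm (Bmat ⇑Φ - Bmat ⇑Ψ) ≤ Knorm ⇑(Φ - Ψ) := by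
  exact hsNorm_B_le_Knorm' Φ Ψ hΦ1 hΨ1 Bmat (fun _ => rfl) hsNorm (fun _ => rfl)
end
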